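/- For integers v and b with 2 ≤ b ≤ v-2, the following inequality holds: (1/b) · ((C(b+1,b)-1)/C(b+1,b)) · ∏_{i=b+3}^{v} ((C(i-1,b)-1)/C(i-1,b)) ≥ 1 - (b²+2b+2)/(b²+3b+2). -/

import Mathlib

open scoped BigOperators

lemma choose_mono_upto {v j k : ℕ} (hjk : j ≤ k) (hk : k ≤ v / 2) :
    Nat.choose v j ≤ Nat.choose v k := by
  induction k, hjk using Nat.le_induction with
  | base => exact le_refl _
  | succ k hk' ih =>
      exact (ih (le_trans (Nat.le_succ k) hk)).trans
        (Nat.choose_le_succ_of_lt_half_left (by omega))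

lemma choose_two_le {v b : ℕ} (hb : 2 ≤ b) (hbv : b + 2 ≤ v) :
    Nat.choose v 2 ≤ Nat.choose v b := by
  have hmod := Nat.div_add_mod v 2
  have hmod2 := Nat.mod_lt v (show 0 < 2 by norm_num)
  by_cases h : b ≤ v / 2
  · exact choose_mono_upto hb h
  · rw [← Nat.choose_symm (by omega : b ≤ v)]
    exact choose_mono_upto (by omega) (by omega)

lemma prod_lb (b : ℕ) (hb : 2 ≤ b) : ∀ v, b + 2 ≤ v →
    ∏ i ∈ Finset.Icc (b + 3) v, (((Nat.choose (i - 1) b : ℝ) - 1) / (Nat.choose (i - 1) b : ℝ))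
      ≥ (b * v : ℝ) / ((b + 2) * (v - 2)) := by
  intro v hv
  induction v, hv using Nat.le_induction with
  | base =>
      rw [Finset.Icc_eq_empty (by omega), Finset.prod_empty]
      have hb2 : (0:ℝ) < (b:ℝ) + 2 := by positivity
      have : ((b:ℝ) + 2) - 2 = (b:ℝ) := by ring
      rw [ge_iff_le, Nat.cast_add, Nat.cast_ofNat, this,
        div_le_one (by positivity)]
      nlinarith [hb2]
  | succ v hv ih =>
      have hb0 : (0:ℝ) < (b:ℝ) := by exact_mod_cast (by omega : 0 < b)
      have hv4 : (4:ℝ) ≤ (v:ℝ) := by exact_mod_cast (by omega : 4 ≤ v)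
      rw [Finset.prod_Icc_succ_top (by omega : b + 3 ≤ v + 1)]
      have hsub : v + 1 - 1 = v := by omega
      rw [hsub]
      -- bounds on the new factor
      have hC2 : (Nat.choose v 2 : ℝ) ≤ (Nat.choose v b : ℝ) := by
        exact_mod_cast choose_two_le hb (by omega)
      have hC2pos : (0:ℝ) < (Nat.choose v 2 : ℝ) := by
        exact_mod_cast Nat.choose_pos (by omega : 2 ≤ v)
      have hCpos : (0:ℝ) < (Nat.choose v b : ℝ) := by
        exact_mod_cast Nat.choose_pos (by omega : b ≤ v)
      have hterm : ((Nat.choose v 2 : ℝ) - 1) / (Nat.choose v 2 : ℝ)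
          ≤ ((Nat.choose v b : ℝ) - 1) / (Nat.choose v b : ℝ) := by
        rw [sub_div, sub_div, div_self (ne_of_gt hC2pos), div_self (ne_of_gt hCpos)]
        have := one_div_le_one_div_of_le hC2pos hC2
        linarith
      have hC2val : (Nat.choose v 2 : ℝ) = (v:ℝ) * ((v:ℝ) - 1) / 2 :=
        Nat.cast_choose_two ℝ v
      have ht0 : ((Nat.choose v 2 : ℝ) - 1) / (Nat.choose v 2 : ℝ)
          = ((v:ℝ) - 2) * ((v:ℝ) + 1) / ((v:ℝ) * ((v:ℝ) - 1)) := by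
        rw [hC2val]
        field_simp
        ring
      have ht0nn : (0:ℝ) ≤ ((v:ℝ) - 2) * ((v:ℝ) + 1) / ((v:ℝ) * ((v:ℝ) - 1)) := by
        apply div_nonneg <;> nlinarith
      have hAnn : (0:ℝ) ≤ (b * v : ℝ) / ((b + 2) * ((v:ℝ) - 2)) := by
        apply div_nonneg <;> nlinarith
      have hne1 : (v:ℝ) - 2 ≠ 0 := by nlinarith
      have hne2 : (v:ℝ) - 1 ≠ 0 := by nlinarith
      have hne3 : (v:ℝ) ≠ 0 := by nlinarith
      have hne4 : (b:ℝ) + 2 ≠ 0 := by nlinarith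
      have key : (b * v : ℝ) / (((b:ℝ) + 2) * ((v:ℝ) - 2)) *
          (((v:ℝ) - 2) * ((v:ℝ) + 1) / ((v:ℝ) * ((v:ℝ) - 1)))
          = ((b:ℝ) * ((v:ℝ) + 1)) / (((b:ℝ) + 2) * (((v:ℝ) + 1) - 2)) := by
        have h1 : ((v:ℝ) + 1) - 2 = (v:ℝ) - 1 := by ring
        rw [h1, div_mul_div_comm, div_eq_div_iff (by positivity) (by positivity)]
        ring
      push_cast
      rw [ge_iff_le]
      calc ((b:ℝ) * ((v:ℝ)+1)) / (((b:ℝ) + 2) * (((v:ℝ)+1) - 2))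
          = (b * v : ℝ) / (((b:ℝ) + 2) * ((v:ℝ) - 2)) *
            (((v:ℝ) - 2) * ((v:ℝ) + 1) / ((v:ℝ) * ((v:ℝ) - 1))) := key.symm
        _ ≤ (∏ i ∈ Finset.Icc (b + 3) v,
              (((Nat.choose (i - 1) b : ℝ) - 1) / (Nat.choose (i - 1) b : ℝ))) *
            (((Nat.choose v b : ℝ) - 1) / (Nat.choose v b : ℝ)) := by
            apply mul_le_mul (ih) (le_trans (le_of_eq ht0.symm) hterm) ht0nn
            exact le_trans hAnn ih

theorem stmt_8 (v b : ℕ) (hb : 2 ≤ b) (hbv : b + 2 ≤ v) :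
    (1 / (b : ℝ)) * (((Nat.choose (b + 1) b : ℝ) - 1) / (Nat.choose (b + 1) b : ℝ)) *
        ∏ i ∈ Finset.Icc (b + 3) v, (((Nat.choose (i - 1) b : ℝ) - 1) / (Nat.choose (i - 1) b : ℝ))
      ≥ 1 - ((b : ℝ) ^ 2 + 2 * b + 2) / ((b : ℝ) ^ 2 + 3 * b + 2) := by
  have hb0 : (0:ℝ) < (b:ℝ) := by exact_mod_cast (by omega : 0 < b)
  have hv4 : (4:ℝ) ≤ (v:ℝ) := by exact_mod_cast (by omega : 4 ≤ v)
  have hbv' : (b:ℝ) + 2 ≤ (v:ℝ) := by exact_mod_cast hbv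
  have hch : (Nat.choose (b+1) b : ℝ) = (b:ℝ) + 1 := by
    rw [Nat.choose_succ_self_right]; push_cast; ring
  have hP := prod_lb b hb v hbv
  have hPlb : (b * v : ℝ) / (((b:ℝ) + 2) * ((v:ℝ) - 2)) ≥ (b:ℝ) / ((b:ℝ) + 2) := by
    rw [ge_iff_le, div_le_div_iff₀ (by positivity) (by nlinarith)]
    nlinarith
  have hRHS : 1 - ((b : ℝ) ^ 2 + 2 * b + 2) / ((b : ℝ) ^ 2 + 3 * b + 2)
      = (b:ℝ) / (((b:ℝ) + 1) * ((b:ℝ) + 2)) := by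
    have h2 : (b:ℝ)^2 + 3*b + 2 = ((b:ℝ)+1)*((b:ℝ)+2) := by ring
    field_simp [h2]
    ring
  rw [hRHS, hch]
  have h1 : (1 / (b:ℝ)) * (((b:ℝ) + 1 - 1) / ((b:ℝ) + 1)) = 1 / ((b:ℝ) + 1) := by
    field_simp
    ring
  rw [h1]
  have hPlb' : (∏ i ∈ Finset.Icc (b + 3) v,
      (((Nat.choose (i - 1) b : ℝ) - 1) / (Nat.choose (i - 1) b : ℝ))) ≥ (b:ℝ) / ((b:ℝ)+2) :=
    le_trans hPlb hP
  rw [ge_iff_le, div_mul_eq_mul_div, div_le_div_iff₀ (by positivity) (by positivity)]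
  calc (b:ℝ) * ((b:ℝ)+1) = (((b:ℝ)+1)*((b:ℝ)+2)) * ((b:ℝ)/((b:ℝ)+2)) := by
        field_simp
    _ ≤ (((b:ℝ)+1)*((b:ℝ)+2)) * ∏ i ∈ Finset.Icc (b + 3) v,
        (((Nat.choose (i - 1) b : ℝ) - 1) / (Nat.choose (i - 1) b : ℝ)) := by
        apply mul_le_mul_of_nonneg_left hPlb' (by positivity)
    _ = (1 * ∏ i ∈ Finset.Icc (b + 3) v,
        (((Nat.choose (i - 1) b : ℝ) - 1) / (Nat.choose (i - 1) b : ℝ))) * (((b:ℝ)+1)*((b:ℝ)+2)) := by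
        ring
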